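/- Let $u, \omega, \rho : \mathbb{R}^2 \to \mathbb{R}$ (with $u = \nabla^\perp (-\Delta)^{-1}\omega$, i.e. $\hat u(\xi) = i\xi^\perp |\xi|^{-2} \hat\omega(\xi)$) be Schwartz functions with $\hat\omega, \hat\rho$ vanishing near the origin. Then $\langle \partial_1 \rho, \omega \rangle_{\dot H^{-1}} + \langle u_2, \rho \rangle_{L^2} = 0$, where $\langle f, g\rangle_{\dot H^{-1}} = \langle \Lambda^{-1} f, \Lambda^{-1} g \rangle_{L^2}$ and $\Lambda = (-\Delta)^{1/2}$. -/

import Mathlib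

open MeasureTheory FourierTransform

/-- The homogeneous `Ḣ^{-1}` inner product `⟨f, g⟩_{Ḣ^{-1}} = ⟨Λ^{-1} f, Λ^{-1} g⟩_{L²}`,
expressed on the Fourier side via Plancherel: the operator `Λ^{-1} = (-Δ)^{-1/2}` is the
Fourier multiplier `(2π‖ξ‖)⁻¹` (in the convention of Mathlib's Fourier transform `𝓕`). -/
noncomputable def innerHneg1 (f g : EuclideanSpace ℝ (Fin 2) → ℂ) : ℂ :=
  ∫ ξ : EuclideanSpace ℝ (Fin 2),
    (((2 * Real.pi * ‖ξ‖) ^ 2 : ℝ) : ℂ)⁻¹ * 𝓕 f ξ * (starRingEnd ℂ) (𝓕 g ξ)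

open scoped RealInnerProductSpace

private abbrev V2 := EuclideanSpace ℝ (Fin 2)

private lemma conj_fourier {f : V2 → ℂ} (hreal : ∀ x, (f x).im = 0) (ξ : V2) :
    (starRingEnd ℂ) (𝓕 f ξ) = 𝓕 f (-ξ) := by
  rw [Real.fourier_eq', Real.fourier_eq', ← integral_conj]
  congr 1; ext x
  rw [smul_eq_mul, smul_eq_mul, map_mul, ← Complex.exp_conj,
    Complex.conj_eq_iff_im.2 (hreal x)]
  congr 2
  simp [Complex.conj_ofReal, inner_neg_right, map_ofNat]

private lemma fourier_pderiv (f : SchwartzMap V2 ℂ) (v ξ : V2) :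
    𝓕 (fun x => fderiv ℝ (⇑f) x v) ξ
      = (2 * Real.pi * Complex.I * ((⟪ξ, v⟫ : ℝ) : ℂ)) * 𝓕 (⇑f) ξ := by
  have hder : Integrable (fderiv ℝ ⇑f) := by
    have : (fderiv ℝ ⇑f) = ⇑(SchwartzMap.fderivCLM ℝ V2 ℂ f) := by
      ext1 x; exact (SchwartzMap.fderivCLM_apply ℝ f x).symm
    rw [this]; exact (SchwartzMap.fderivCLM ℝ V2 ℂ f).integrable
  have key := Real.fourier_fderiv f.integrable f.differentiable hder
  rw [← Real.fourier_continuousLinearMap_apply hder, key]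
  simp [VectorFourier.fourierSMulRight_apply, smul_eq_mul, innerSL_apply_apply ℝ]
  ring

private lemma parseval_mul (f g : SchwartzMap V2 ℂ) :
    ∫ ξ, 𝓕 (⇑f) ξ * g ξ = ∫ x, f x * 𝓕 (⇑g) x := by
  have hL : Continuous fun p : V2 × V2 => (innerₗ V2) p.1 p.2 := by
    simpa using (continuous_inner (𝕜 := ℝ) (E := V2))
  have hflip : (innerₗ V2).flip = innerₗ V2 := by
    ext x y
    simp [real_inner_comm]
  have h := VectorFourier.integral_bilin_fourierIntegral_eq_flip
    (μ := (volume : Measure V2)) (ν := (volume : Measure V2))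
    (ContinuousLinearMap.mul ℂ ℂ) Real.continuous_fourierChar hL f.integrable g.integrable
  rw [hflip] at h
  simp only [ContinuousLinearMap.mul_apply'] at h
  exact h

theorem stmt8 (ω ρ u2 : SchwartzMap (EuclideanSpace ℝ (Fin 2)) ℂ)
    (hω_real : ∀ x, (ω x).im = 0) (hρ_real : ∀ x, (ρ x).im = 0)
    (hu2_real : ∀ x, (u2 x).im = 0)
    (hvanish : ∃ ε > (0:ℝ), ∀ ξ : EuclideanSpace ℝ (Fin 2),
      ‖ξ‖ < ε → 𝓕 (⇑ω) ξ = 0 ∧ 𝓕 (⇑ρ) ξ = 0)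
    (hu2 : ∀ ξ : EuclideanSpace ℝ (Fin 2),
      𝓕 (⇑u2) ξ = Complex.I * ((ξ 0 : ℝ) : ℂ) * (((2 * Real.pi * ‖ξ‖ ^ 2 : ℝ)) : ℂ)⁻¹
        * 𝓕 (⇑ω) ξ) :
    innerHneg1 (fun x => fderiv ℝ (⇑ρ) x (EuclideanSpace.single 0 1)) (⇑ω)
      + ∫ x : EuclideanSpace ℝ (Fin 2), u2 x * (starRingEnd ℂ) (ρ x) = 0 := by
  obtain ⟨ε, hε, hvan⟩ := hvanish
  set e0 : V2 := EuclideanSpace.single 0 1 with he0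
  -- Schwartz representatives of the Fourier transforms
  set Fs := SchwartzMap.fourierTransformCLM ℝ ω with hFsdef
  set Gs := SchwartzMap.fourierTransformCLM ℝ ρ with hGsdef
  set U2s := SchwartzMap.fourierTransformCLM ℝ u2 with hU2sdef
  have hP : (fun x => fderiv ℝ (⇑ρ) x e0) = ⇑(LineDeriv.lineDerivOp e0 ρ) := by
    ext1 x; exact (SchwartzMap.lineDerivOp_apply_eq_fderiv e0 ρ x).symm
  set Ps := SchwartzMap.fourierTransformCLM ℝ (LineDeriv.lineDerivOp e0 ρ) with hPsdef
  have hFs : ⇑Fs = 𝓕 ⇑ω := rfl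
  have hGs : ⇑Gs = 𝓕 ⇑ρ := rfl
  have hU2s : ⇑U2s = 𝓕 ⇑u2 := rfl
  have hPs : ⇑Ps = 𝓕 (fun x => fderiv ℝ (⇑ρ) x e0) := by rw [hP]; rfl
  -- the two integrands
  set h₁ : V2 → ℂ := fun ξ =>
    (((2 * Real.pi * ‖ξ‖) ^ 2 : ℝ) : ℂ)⁻¹ * 𝓕 (fun x => fderiv ℝ (⇑ρ) x e0) ξ
      * (starRingEnd ℂ) (𝓕 (⇑ω) ξ) with hh₁
  set h₂ : V2 → ℂ := fun ξ => 𝓕 (⇑u2) ξ * (starRingEnd ℂ) (𝓕 (⇑ρ) ξ) with hh₂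
  -- Step 1 : the first term is ∫ h₁
  have hA : innerHneg1 (fun x => fderiv ℝ (⇑ρ) x e0) (⇑ω) = ∫ ξ, h₁ ξ := rfl
  -- Step 2 : Parseval for the second term
  have hB : (∫ x : V2, u2 x * (starRingEnd ℂ) (ρ x)) = ∫ ξ, h₂ ξ := by
    have hconjρ : ∀ x, (starRingEnd ℂ) (ρ x) = ρ x :=
      fun x => Complex.conj_eq_iff_im.2 (hρ_real x)
    set g := (FourierTransform.fourierCLE ℝ (SchwartzMap V2 ℂ)).symm ρ with hgdef
    have hgF : 𝓕 ⇑g = ⇑ρ := by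
      rw [← SchwartzMap.fourier_coe, hgdef, FourierTransform.fourierCLE_symm_apply,
        FourierTransform.fourier_fourierInv_eq]
    have hgval : ∀ ξ, g ξ = (starRingEnd ℂ) (𝓕 (⇑ρ) ξ) := by
      intro ξ
      have h1 : ⇑g = 𝓕⁻ ⇑ρ := by
          rw [hgdef, FourierTransform.fourierCLE_symm_apply, SchwartzMap.fourierInv_coe]
      rw [h1, Real.fourierInv_eq_fourier_neg]
      exact (conj_fourier hρ_real ξ).symm
    calc (∫ x : V2, u2 x * (starRingEnd ℂ) (ρ x)) = ∫ x : V2, u2 x * ρ x := by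
          simp_rw [hconjρ]
      _ = ∫ x : V2, u2 x * 𝓕 ⇑g x := by rw [hgF]
      _ = ∫ ξ, 𝓕 (⇑u2) ξ * g ξ := (parseval_mul u2 g).symm
      _ = ∫ ξ, h₂ ξ := by simp_rw [hgval]; rfl
  -- Integrability of the two integrands
  have hInt₁ : Integrable h₁ := by
    set C : ℝ := ((2 * Real.pi * ε) ^ 2)⁻¹ * (SchwartzMap.seminorm ℝ 0 0 Ps) with hC
    refine Integrable.mono' ((Fs.integrable.norm).const_mul C) ?_ ?_
    · apply AEStronglyMeasurable.mul
      apply AEStronglyMeasurable.mul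
      · exact ((Complex.measurable_ofReal.comp
          ((continuous_const.mul continuous_norm).pow 2).measurable).inv).aestronglyMeasurable
      · rw [← hPs]; exact Ps.continuous.aestronglyMeasurable
      · exact (Complex.continuous_conj.comp (hFs ▸ Fs.continuous)).aestronglyMeasurable
    · refine Filter.Eventually.of_forall fun ξ => ?_
      rcases lt_or_ge ‖ξ‖ ε with hlt | hge
      · have : 𝓕 (⇑ω) ξ = 0 := (hvan ξ hlt).1
        simp only [hh₁, this, map_zero, mul_zero, norm_zero]
        positivity
      · have hb1 : ‖(((2 * Real.pi * ‖ξ‖) ^ 2 : ℝ) : ℂ)⁻¹‖ ≤ ((2 * Real.pi * ε) ^ 2)⁻¹ := by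
          rw [norm_inv, Complex.norm_real, Real.norm_eq_abs, abs_of_nonneg (by positivity)]
          apply inv_anti₀ (by positivity)
          have h2 : 2 * Real.pi * ε ≤ 2 * Real.pi * ‖ξ‖ :=
            mul_le_mul_of_nonneg_left hge (by positivity)
          exact pow_le_pow_left₀ (by positivity) h2 2
        have hb2 : ‖𝓕 (fun x => fderiv ℝ (⇑ρ) x e0) ξ‖ ≤ SchwartzMap.seminorm ℝ 0 0 Ps := by
          rw [← hPs]; exact SchwartzMap.norm_le_seminorm ℝ Ps ξ
        calc ‖h₁ ξ‖ = ‖(((2 * Real.pi * ‖ξ‖) ^ 2 : ℝ) : ℂ)⁻¹‖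
              * ‖𝓕 (fun x => fderiv ℝ (⇑ρ) x e0) ξ‖ * ‖𝓕 (⇑ω) ξ‖ := by
              simp [hh₁, norm_mul]
          _ ≤ ((2 * Real.pi * ε) ^ 2)⁻¹ * (SchwartzMap.seminorm ℝ 0 0 Ps) * ‖𝓕 (⇑ω) ξ‖ :=
              mul_le_mul_of_nonneg_right
                (mul_le_mul hb1 hb2 (norm_nonneg _) (by positivity)) (norm_nonneg _)
          _ = C * ‖Fs ξ‖ := by rw [hC, hFs]
  have hInt₂ : Integrable h₂ := by
    set C : ℝ := (SchwartzMap.seminorm ℝ 0 0 U2s) with hC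
    refine Integrable.mono' ((Gs.integrable.norm).const_mul C) ?_ ?_
    · exact ((hU2s ▸ U2s.continuous).mul
        (Complex.continuous_conj.comp (hGs ▸ Gs.continuous))).aestronglyMeasurable
    · refine Filter.Eventually.of_forall fun ξ => ?_
      calc ‖h₂ ξ‖ = ‖𝓕 (⇑u2) ξ‖ * ‖𝓕 (⇑ρ) ξ‖ := by simp [hh₂, norm_mul]
        _ ≤ C * ‖Gs ξ‖ :=
            mul_le_mul_of_nonneg_right
              (by rw [← hU2s]; exact SchwartzMap.norm_le_seminorm ℝ U2s ξ) (norm_nonneg _)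
  -- the combined (odd) integrand
  set S : V2 → ℂ := fun ξ =>
    Complex.I * ((ξ 0 : ℝ) : ℂ) * (((2 * Real.pi * ‖ξ‖ ^ 2 : ℝ)) : ℂ)⁻¹ *
      (𝓕 (⇑ρ) ξ * (starRingEnd ℂ) (𝓕 (⇑ω) ξ)
        + 𝓕 (⇑ω) ξ * (starRingEnd ℂ) (𝓕 (⇑ρ) ξ)) with hSdef
  have hsum : ∀ ξ, h₁ ξ + h₂ ξ = S ξ := by
    intro ξ
    have hinner : (⟪ξ, e0⟫ : ℝ) = ξ 0 := by
      simp [he0, EuclideanSpace.inner_single_right]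
    simp only [hh₁, hh₂, hSdef, fourier_pderiv ρ e0 ξ, hu2 ξ, hinner]
    rcases eq_or_ne ‖ξ‖ 0 with hn | hn
    · have hξ0 : ξ 0 = 0 := by
        have : ξ = 0 := norm_eq_zero.mp hn
        simp [this]
      simp [hξ0]
    · have hnc : ((‖ξ‖ : ℝ) : ℂ) ≠ 0 := Complex.ofReal_ne_zero.mpr hn
      have hpc : ((Real.pi : ℝ) : ℂ) ≠ 0 := Complex.ofReal_ne_zero.mpr Real.pi_ne_zero
      push_cast
      field_simp
  have hSodd : ∀ ξ, S (-ξ) = -S ξ := by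
    intro ξ
    have hn : ‖(-ξ : V2)‖ = ‖ξ‖ := norm_neg ξ
    have h0 : ((-ξ : V2) 0 : ℝ) = -(ξ 0) := rfl
    have hFneg : 𝓕 (⇑ω) (-ξ) = (starRingEnd ℂ) (𝓕 (⇑ω) ξ) := (conj_fourier hω_real ξ).symm
    have hGneg : 𝓕 (⇑ρ) (-ξ) = (starRingEnd ℂ) (𝓕 (⇑ρ) ξ) := (conj_fourier hρ_real ξ).symm
    simp only [hSdef, hn, h0, hFneg, hGneg, Complex.conj_conj, Complex.ofReal_neg]
    ring
  have hSint : (∫ ξ, S ξ) = 0 := by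
    have h1 : (∫ ξ, S ξ) = ∫ ξ, S (-ξ) := (integral_neg_eq_self S volume).symm
    have h2 : (∫ ξ, S ξ) = -∫ ξ, S ξ := by
      calc (∫ ξ, S ξ) = ∫ ξ, S (-ξ) := h1
        _ = ∫ ξ, -S ξ := by simp_rw [hSodd]
        _ = -∫ ξ, S ξ := integral_neg S
    exact add_self_eq_zero.mp (by linear_combination h2)
  rw [hA, hB, ← integral_add hInt₁ hInt₂]
  simp_rw [hsum]
  exact hSint
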